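/- Let H be a complex Hilbert space, D a dictionary (a set of unit vectors whose closed linear span equals H), M > 0, and f ∈ H(D,M) with representation f = ∑_{j=1}^∞ c_j ψ̃_j, ψ̃_j ∈ D, ∑_{j=1}^∞ |c_j| ≤ M. Suppose the Weak Pre-Orthogonal Greedy Algorithm with weakness parameters t_k ∈ (0,1] produces selections ψ_1, ψ_2, … ∈ D as follows: H_0 = {0}; at step k, H_k is the span of {ψ_1,…,ψ_k}, f_k = f − P_{H_{k-1}}(f), ψ_k satisfies d_k := ‖ψ_k − P_{H_{k-1}}(ψ_k)‖ > 0, B_k := (ψ_k − P_{H_{k-1}}(ψ_k))/d_k, and |⟨f_k, B_k⟩| ≥ t_k·sup{ |⟨f_k, ψ⟩|/‖ψ − P_{H_{k-1}}(ψ)‖ : ψ ∈ D, ‖ψ − P_{H_{k-1}}(ψ)‖ > 0 }. Set r_k = sup_{j≥1} ‖ψ̃_j − P_{H_{k-1}}(ψ̃_j)‖ and assume r_k > 0. Then for every n ≥ 1, ‖f_n‖ ≤ M·(1 + ∑_{k=1}^{n-1} (t_k/r_k)²)^{-1/2}. -/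

import Mathlib

noncomputable def proj {H : Type*} [NormedAddCommGroup H] [InnerProductSpace ℂ H]
    [CompleteSpace H] (K : Submodule ℂ H) (f : H) : H :=
  haveI : CompleteSpace K.topologicalClosure := K.isClosed_topologicalClosure.completeSpace_coe
  (K.topologicalClosure.orthogonalProjectionOnto f : H)

section helpers
variable {H : Type*} [NormedAddCommGroup H] [InnerProductSpace ℂ H] [CompleteSpace H]

lemma proj_mem (K : Submodule ℂ H) (g : H) : proj K g ∈ K.topologicalClosure := by
  haveI : CompleteSpace K.topologicalClosure := K.isClosed_topologicalClosure.completeSpace_coe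
  exact (K.topologicalClosure.orthogonalProjectionOnto g).2

lemma inner_sub_proj (K : Submodule ℂ H) (g w : H) (hw : w ∈ K) :
    (inner ℂ w (g - proj K g) : ℂ) = 0 := by
  haveI : CompleteSpace K.topologicalClosure := K.isClosed_topologicalClosure.completeSpace_coe
  have h := Submodule.sub_starProjection_mem_orthogonal (K := K.topologicalClosure) g
  exact (Submodule.mem_orthogonal _ _).1 h w (K.le_topologicalClosure hw)

lemma inner_sub_proj' (K : Submodule ℂ H) (g w : H) (hw : w ∈ K) :
    (inner ℂ (g - proj K g) w : ℂ) = 0 := by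
  rw [← inner_conj_symm, inner_sub_proj K g w hw, map_zero]

lemma norm_sub_proj_le (K : Submodule ℂ H) (g v : H) (hv : v ∈ K) :
    ‖g - proj K g‖ ≤ ‖g - v‖ := by
  haveI : CompleteSpace K.topologicalClosure := K.isClosed_topologicalClosure.completeSpace_coe
  rw [show proj K g = K.topologicalClosure.starProjection g from (Submodule.starProjection_apply _ _).symm,
    Submodule.starProjection_minimal]
  exact ciInf_le ⟨0, by rintro x ⟨w, rfl⟩; positivity⟩
    (⟨v, K.le_topologicalClosure hv⟩ : K.topologicalClosure)

/-- Pythagoras step: removing the component along a unit vector. -/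
lemma norm_sub_inner_smul_sq (B x : H) (hB : ‖B‖ = 1) :
    ‖x - (inner ℂ B x : ℂ) • B‖ ^ 2 = ‖x‖ ^ 2 - ‖(inner ℂ x B : ℂ)‖ ^ 2 := by
  have h := @norm_sub_sq ℂ _ _ _ _ x ((inner ℂ B x : ℂ) • B)
  rw [inner_smul_right, norm_smul, hB] at h
  have h1 : (inner ℂ B x : ℂ) * (inner ℂ x B : ℂ) =
      (inner ℂ B x : ℂ) * (starRingEnd ℂ) (inner ℂ B x : ℂ) := by
    rw [← inner_conj_symm x B]
  rw [h1, Complex.mul_conj] at h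
  have h2 : ‖(inner ℂ x B : ℂ)‖ = ‖(inner ℂ B x : ℂ)‖ := by
    rw [← inner_conj_symm x B, RCLike.norm_conj]
  rw [show (RCLike.re : ℂ →+ ℝ) ((Complex.normSq (inner ℂ B x) : ℝ) : ℂ) = Complex.normSq (inner ℂ B x) from Complex.ofReal_re _] at h
  rw [h, h2, Complex.normSq_eq_norm_sq]
  ring
end helpers

set_option maxHeartbeats 1000000 in
/-- Error bound of WPre-OGA: for `f ∈ H(D,M)` with representation `f = ∑ c j • ψt j`,
selections `ψ k ∈ D` with `d k = ‖ψ k - P_{H_{k-1}} ψ k‖ > 0`,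
`B k = (ψ k - P_{H_{k-1}} ψ k)/d k`, pre-orthogonal weak maximal selection
`|⟨f_k, B_k⟩| ≥ t_k · sup {|⟨f_k, φ⟩|/‖φ - P_{H_{k-1}} φ‖ : φ ∈ D, ‖φ - P_{H_{k-1}} φ‖ > 0}`
(stated equivalently elementwise), and `r k = sup_j ‖ψt j - P_{H_{k-1}} ψt j‖ > 0`,
one has `‖f_n‖ ≤ M·(1 + ∑_{k=1}^{n-1} (t k / r k)²)^{-1/2}`. -/
theorem stmt9 {H : Type*} [NormedAddCommGroup H] [InnerProductSpace ℂ H] [CompleteSpace H]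
    (D : Set H) (hD_unit : ∀ φ ∈ D, ‖φ‖ = 1)
    (hD_span : (Submodule.span ℂ D).topologicalClosure = ⊤)
    (M : ℝ) (hM : 0 < M)
    (c : ℕ → ℂ) (ψt : ℕ → H) (hψt : ∀ j, ψt j ∈ D)
    (f : H) (hf : HasSum (fun j => c j • ψt j) f)
    (hc_summable : Summable fun j => ‖c j‖) (hcM : ∑' j, ‖c j‖ ≤ M)
    (t : ℕ → ℝ) (ht : ∀ k, 1 ≤ k → 0 < t k ∧ t k ≤ 1)
    (ψ : ℕ → H) (hψD : ∀ k, 1 ≤ k → ψ k ∈ D)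
    (Hk : ℕ → Submodule ℂ H)
    (hHk : ∀ k, Hk k = Submodule.span ℂ (ψ '' {j | 1 ≤ j ∧ j ≤ k}))
    (fk : ℕ → H) (hfk : ∀ n, 1 ≤ n → fk n = f - proj (Hk (n - 1)) f)
    (hd : ∀ k, 1 ≤ k → 0 < ‖ψ k - proj (Hk (k - 1)) (ψ k)‖)
    (Bk : ℕ → H)
    (hBk : ∀ k, 1 ≤ k → Bk k =
      (‖ψ k - proj (Hk (k - 1)) (ψ k)‖)⁻¹ • (ψ k - proj (Hk (k - 1)) (ψ k)))
    (hsel : ∀ k, 1 ≤ k → ∀ φ ∈ D, 0 < ‖φ - proj (Hk (k - 1)) φ‖ →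
      t k * (‖(inner ℂ (fk k) φ : ℂ)‖ / ‖φ - proj (Hk (k - 1)) φ‖)
        ≤ ‖(inner ℂ (fk k) (Bk k) : ℂ)‖)
    (rk : ℕ → ℝ) (hrk : ∀ k, 1 ≤ k → rk k = ⨆ j, ‖ψt j - proj (Hk (k - 1)) (ψt j)‖)
    (hrk_pos : ∀ k, 1 ≤ k → 0 < rk k) :
    ∀ n, 1 ≤ n → ‖fk n‖ ≤
      M / Real.sqrt (1 + ∑ k ∈ Finset.Icc 1 (n - 1), (t k / rk k) ^ 2) := by
  -- basic structure facts
  have hfin : ∀ m, FiniteDimensional ℂ (Hk m) := by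
    intro m; rw [hHk]
    exact FiniteDimensional.span_of_finite ℂ ((Set.finite_Icc 1 m).image ψ)
  have hcl : ∀ m, (Hk m).topologicalClosure = Hk m := by
    intro m
    haveI := hfin m
    exact (Submodule.closed_of_finiteDimensional (Hk m)).submodule_topologicalClosure_eq
  have hmem_proj : ∀ m (g : H), proj (Hk m) g ∈ Hk m := by
    intro m g; have := proj_mem (Hk m) g; rwa [hcl m] at this
  have hmono : ∀ m, Hk m ≤ Hk (m + 1) := by
    intro m; rw [hHk, hHk]
    exact Submodule.span_mono (Set.image_mono (f := ψ) (fun j hj => ⟨hj.1, hj.2.trans (Nat.le_succ m)⟩))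
  -- fk is orthogonal to Hk (n-1)
  have horth : ∀ n, 1 ≤ n → ∀ w ∈ Hk (n - 1), (inner ℂ (fk n) w : ℂ) = 0 := by
    intro n hn w hw; rw [hfk n hn]; exact inner_sub_proj' _ f w hw
  -- ‖f‖ ≤ M
  have hfM : ‖f‖ ≤ M := by
    have h1 : ‖f‖ ≤ ∑' j, ‖c j • ψt j‖ := by
      rw [← hf.tsum_eq]
      apply norm_tsum_le_tsum_norm
      simpa [norm_smul, hD_unit _ (hψt _)] using hc_summable
    calc ‖f‖ ≤ ∑' j, ‖c j • ψt j‖ := h1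
      _ = ∑' j, ‖c j‖ := by
          congr 1; funext j; rw [norm_smul, hD_unit _ (hψt j), mul_one]
      _ ≤ M := hcM
  -- general monotonicity
  have hmono' : ∀ m₁ m₂, m₁ ≤ m₂ → Hk m₁ ≤ Hk m₂ := by
    intro m1 m2 h; rw [hHk, hHk]
    exact Submodule.span_mono (Set.image_mono (f := ψ) fun j hj => ⟨hj.1, hj.2.trans h⟩)
  -- step C : energy captured by the selected direction
  have hC : ∀ k, 1 ≤ k → ‖fk k‖ ^ 2 * t k ≤ M * rk k * ‖(inner ℂ (fk k) (Bk k) : ℂ)‖ := by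
    intro k hk
    have htk := (ht k hk).1
    have hrpos := hrk_pos k hk
    have hx : True := trivial
    set C := ‖(inner ℂ (fk k) (Bk k) : ℂ)‖ with hCdef
    have hC0 : (0:ℝ) ≤ C := norm_nonneg _
    have hbdd : BddAbove (Set.range fun j => ‖ψt j - proj (Hk (k - 1)) (ψt j)‖) := by
      refine ⟨1, ?_⟩
      rintro _ ⟨j, rfl⟩
      have h0 : (0 : H) ∈ Hk (k - 1) := zero_mem _
      have h1 := norm_sub_proj_le (Hk (k - 1)) (ψt j) 0 h0
      simpa [hD_unit _ (hψt j)] using h1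
    have hle_r : ∀ j, ‖ψt j - proj (Hk (k - 1)) (ψt j)‖ ≤ rk k := by
      intro j; rw [hrk k hk]; exact le_ciSup hbdd j
    have hterm : ∀ j, ‖(inner ℂ (fk k) (ψt j) : ℂ)‖ ≤ rk k * C / t k := by
      intro j
      have hz : (inner ℂ (fk k) (proj (Hk (k - 1)) (ψt j)) : ℂ) = 0 :=
        horth k hk _ (by have := proj_mem (Hk (k-1)) (ψt j); rwa [hcl] at this)
      have hsplit : (inner ℂ (fk k) (ψt j) : ℂ) = inner ℂ (fk k) (ψt j - proj (Hk (k - 1)) (ψt j)) := by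
        rw [inner_sub_right, hz, sub_zero]
      by_cases hepos : 0 < ‖ψt j - proj (Hk (k - 1)) (ψt j)‖
      · have hs := hsel k hk (ψt j) (hψt j) hepos
        rw [← hCdef] at hs
        have h1 : ‖(inner ℂ (fk k) (ψt j) : ℂ)‖ / ‖ψt j - proj (Hk (k - 1)) (ψt j)‖ ≤ C / t k :=
          (le_div_iff₀' htk).2 hs
        calc ‖(inner ℂ (fk k) (ψt j) : ℂ)‖
            = (‖(inner ℂ (fk k) (ψt j) : ℂ)‖ / ‖ψt j - proj (Hk (k - 1)) (ψt j)‖) *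
              ‖ψt j - proj (Hk (k - 1)) (ψt j)‖ := by field_simp
          _ ≤ (C / t k) * ‖ψt j - proj (Hk (k - 1)) (ψt j)‖ :=
              mul_le_mul_of_nonneg_right h1 (norm_nonneg _)
          _ ≤ (C / t k) * rk k := by
              exact mul_le_mul_of_nonneg_left (hle_r j) (by positivity)
          _ = rk k * C / t k := by ring
      · push_neg at hepos
        have he0 : ψt j - proj (Hk (k - 1)) (ψt j) = 0 :=
          norm_eq_zero.1 (le_antisymm hepos (norm_nonneg _))
        rw [hsplit, he0, inner_zero_right, norm_zero]
        positivity
    have hxx : ‖fk k‖ ^ 2 = ‖(inner ℂ (fk k) f : ℂ)‖ := by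
      have hz : (inner ℂ (fk k) (proj (Hk (k - 1)) f) : ℂ) = 0 :=
        horth k hk _ (by have := proj_mem (Hk (k-1)) f; rwa [hcl] at this)
      have h2 : (inner ℂ (fk k) f : ℂ) = inner ℂ (fk k) (fk k) := by
        conv_lhs => rw [show f = (fk k) + proj (Hk (k - 1)) f by rw [hfk k hk]; abel]
        rw [inner_add_right, hz, add_zero]
      rw [h2, inner_self_eq_norm_sq_to_K]
      simp
    have hsum : HasSum (fun j => c j * (inner ℂ (fk k) (ψt j) : ℂ)) (inner ℂ (fk k) f : ℂ) := by
      have h5 := ContinuousLinearMap.hasSum (innerSL ℂ (fk k)) hf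
      simpa [innerSL_apply_apply, inner_smul_right] using h5
    have hnormterm : ∀ j, ‖c j * (inner ℂ (fk k) (ψt j) : ℂ)‖ ≤ ‖c j‖ * (rk k * C / t k) := by
      intro j
      rw [norm_mul]
      exact mul_le_mul_of_nonneg_left (hterm j) (norm_nonneg _)
    have hS2 : Summable fun j => ‖c j * (inner ℂ (fk k) (ψt j) : ℂ)‖ :=
      Summable.of_nonneg_of_le (fun j => norm_nonneg _) hnormterm (hc_summable.mul_right _)
    have hfinal : ‖(inner ℂ (fk k) f : ℂ)‖ ≤ M * (rk k * C / t k) := by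
      rw [← hsum.tsum_eq]
      calc ‖∑' j, (c j * (inner ℂ (fk k) (ψt j) : ℂ))‖
          ≤ ∑' j, ‖c j * (inner ℂ (fk k) (ψt j) : ℂ)‖ := norm_tsum_le_tsum_norm hS2
        _ ≤ ∑' j, ‖c j‖ * (rk k * C / t k) :=
            Summable.tsum_le_tsum hnormterm hS2 (hc_summable.mul_right _)
        _ = (∑' j, ‖c j‖) * (rk k * C / t k) := hc_summable.tsum_mul_right _
        _ ≤ M * (rk k * C / t k) := mul_le_mul_of_nonneg_right hcM (by positivity)
    have h3 : ‖fk k‖ ^ 2 ≤ M * rk k * C / t k := by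
      rw [hxx]
      calc ‖(inner ℂ (fk k) f : ℂ)‖ ≤ M * (rk k * C / t k) := hfinal
        _ = M * rk k * C / t k := by ring
    exact (le_div_iff₀ htk).1 h3
  -- step B : energy decrease
  have hB : ∀ k, 1 ≤ k →
      ‖fk (k + 1)‖ ^ 2 ≤ ‖fk k‖ ^ 2 - ‖(inner ℂ (fk k) (Bk k) : ℂ)‖ ^ 2 := by
    intro k hk
    have hd' := hd k hk
    have hBnorm : ‖Bk k‖ = 1 := by
      rw [hBk k hk, norm_smul, norm_inv, norm_norm]
      field_simp
    have hle : Hk (k - 1) ≤ Hk k := hmono' _ _ (Nat.sub_le k 1)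
    have hBmem : Bk k ∈ Hk k := by
      rw [hBk k hk]
      refine Submodule.smul_mem _ _ (Submodule.sub_mem _ ?_ ?_)
      · rw [hHk]; exact Submodule.subset_span ⟨k, ⟨hk, le_rfl⟩, rfl⟩
      · exact hle (hmem_proj _ _)
    have hPmem : proj (Hk (k - 1)) f ∈ Hk k := hle (hmem_proj _ _)
    set x := fk k with hx
    set v := proj (Hk (k - 1)) f + (inner ℂ (Bk k) x : ℂ) • Bk k with hv
    have hvmem : v ∈ Hk k := add_mem hPmem (Submodule.smul_mem _ _ hBmem)
    have h1 : ‖fk (k + 1)‖ ≤ ‖f - v‖ := by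
      rw [hfk (k + 1) (by omega)]
      have hkk : k + 1 - 1 = k := by omega
      rw [hkk]
      exact norm_sub_proj_le (Hk k) f v hvmem
    have h2 : f - v = x - (inner ℂ (Bk k) x : ℂ) • Bk k := by
      rw [hv, hx, hfk k hk]; abel
    have h3 := norm_sub_inner_smul_sq (Bk k) x hBnorm
    calc ‖fk (k + 1)‖ ^ 2 ≤ ‖f - v‖ ^ 2 := pow_le_pow_left₀ (norm_nonneg _) h1 2
      _ = ‖x‖ ^ 2 - ‖(inner ℂ x (Bk k) : ℂ)‖ ^ 2 := by rw [h2, h3]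
  -- sum bounds
  have hSnonneg : ∀ n, (1:ℝ) ≤ 1 + ∑ k ∈ Finset.Icc 1 (n - 1), (t k / rk k) ^ 2 := by
    intro n
    have : (0:ℝ) ≤ ∑ k ∈ Finset.Icc 1 (n - 1), (t k / rk k) ^ 2 :=
      Finset.sum_nonneg fun k _ => sq_nonneg _
    linarith
  -- main induction
  have key : ∀ n, 1 ≤ n →
      ‖fk n‖ ^ 2 * (1 + ∑ k ∈ Finset.Icc 1 (n - 1), (t k / rk k) ^ 2) ≤ M ^ 2 := by
    intro n hn
    induction n, hn using Nat.le_induction with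
    | base =>
        have hf1 : ‖fk 1‖ ≤ ‖f‖ := by
          rw [hfk 1 le_rfl]
          have := norm_sub_proj_le (Hk 0) f 0 (zero_mem _)
          simpa using this
        have : ‖fk 1‖ ≤ M := hf1.trans hfM
        have hIcc : Finset.Icc 1 (1 - 1) = (∅ : Finset ℕ) := by decide
        rw [hIcc]
        simp only [Finset.sum_empty, add_zero, mul_one]
        exact pow_le_pow_left₀ (norm_nonneg _) this 2
    | succ n hn IH =>
        have IH' := IH
        set a := ‖fk n‖ ^ 2 with ha
        set S := 1 + ∑ k ∈ Finset.Icc 1 (n - 1), (t k / rk k) ^ 2 with hSdef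
        have hSum : (1:ℝ) + ∑ k ∈ Finset.Icc 1 (n + 1 - 1), (t k / rk k) ^ 2
            = S + (t n / rk n) ^ 2 := by
          have h1 : n + 1 - 1 = (n - 1) + 1 := by omega
          rw [h1, Finset.sum_Icc_succ_top (by omega : 1 ≤ (n - 1) + 1)]
          have h2 : n - 1 + 1 = n := by omega
          rw [h2, hSdef]; ring
        rw [hSum]
        set b := (t n / (M * rk n)) ^ 2 with hb
        clear_value b
        have hbnn : (0:ℝ) ≤ b := by rw [hb]; positivity
        have hrb : (t n / rk n) ^ 2 = M ^ 2 * b := by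
          rw [hb]
          have h6 := (hrk_pos n hn).ne'
          field_simp
        have htn := (ht n hn).1
        have hrn := hrk_pos n hn
        -- C ≥ t a / (M r)
        have hCb := hC n hn
        set C := ‖(inner ℂ (fk n) (Bk n) : ℂ)‖ with hCdef
        have hCge : t n * a / (M * rk n) ≤ C := by
          rw [div_le_iff₀ (by positivity)]
          nlinarith [hCb]
        have hCsq : b * a ^ 2 ≤ C ^ 2 := by
          have h4 : (t n * a / (M * rk n)) ^ 2 ≤ C ^ 2 :=
            pow_le_pow_left₀ (by positivity) hCge 2
          calc b * a ^ 2 = (t n * a / (M * rk n)) ^ 2 := by rw [hb]; ring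
            _ ≤ C ^ 2 := h4
        have hrec : ‖fk (n + 1)‖ ^ 2 ≤ a - b * a ^ 2 := by
          have := hB n hn
          rw [← hCdef, ← ha] at this
          linarith
        have hSn : (1:ℝ) ≤ S := hSnonneg n
        have hann : (0:ℝ) ≤ a := sq_nonneg _
        have hX : (0:ℝ) ≤ M ^ 2 - a * S := by linarith [IH']
        have haS : (0:ℝ) ≤ a * S := mul_nonneg hann (by linarith)
        rw [hrb]
        have hstep1 : ‖fk (n + 1)‖ ^ 2 * (S + M ^ 2 * b) ≤ (a - b * a ^ 2) * (S + M ^ 2 * b) := by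
          apply mul_le_mul_of_nonneg_right hrec
          positivity
        refine hstep1.trans ?_
        nlinarith [mul_nonneg hX (sq_nonneg (a * b - 1/2)), mul_nonneg haS (sq_nonneg (a * b)), hX]
  -- conclusion
  intro n hn
  set S := 1 + ∑ k ∈ Finset.Icc 1 (n - 1), (t k / rk k) ^ 2 with hSdef
  have hS1 : (1:ℝ) ≤ S := hSnonneg n
  have hSpos : (0:ℝ) < S := by linarith
  have h1 : ‖fk n‖ ^ 2 ≤ M ^ 2 / S := (le_div_iff₀ hSpos).2 (key n hn)
  calc ‖fk n‖ = Real.sqrt (‖fk n‖ ^ 2) := (Real.sqrt_sq (norm_nonneg _)).symm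
    _ ≤ Real.sqrt (M ^ 2 / S) := Real.sqrt_le_sqrt h1
    _ = M / Real.sqrt S := by
        rw [Real.sqrt_div (sq_nonneg M), Real.sqrt_sq hM.le]
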